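/- Let D > 0, K > 1 and E > 1 be real numbers with π(D+1)E^{−1/4} < 1 and 2^{1/4}K^{1/3} < E^{1/4}, and set k = K^{2/3}E^{1/4}. Then exp( 2(D+1)k − (2/π)·((k/K)⁴ − 1)^{−1/2}·E ) ≤ (3π³/4) · ( K² · E^{3/2} · (1 − π(D+1)E^{−1/4})³ )^{−1}. -/

import Mathlib

set_option maxHeartbeats 1000000 in
/-- The key arithmetic estimate combining the harmonic-measure lower bound with the
choice `k = K^{2/3} E^{1/4}` and the elementary inequality `e^{−y} ≤ 6/y³`. -/
theorem key_arithmetic_estimate (D K E k : ℝ) (hD : 0 < D) (hK : 1 < K) (hE : 1 < E)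
    (h1 : Real.pi * (D + 1) * E ^ (-(1:ℝ)/4) < 1)
    (h2 : (2:ℝ) ^ ((1:ℝ)/4) * K ^ ((1:ℝ)/3) < E ^ ((1:ℝ)/4))
    (hk : k = K ^ ((2:ℝ)/3) * E ^ ((1:ℝ)/4)) :
    Real.exp (2 * (D + 1) * k - (2 / Real.pi) * ((k / K)^4 - 1) ^ (-(1:ℝ)/2) * E) ≤
      (3 * Real.pi^3 / 4) *
        (K^2 * E ^ ((3:ℝ)/2) * (1 - Real.pi * (D + 1) * E ^ (-(1:ℝ)/4))^3)⁻¹ := by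
  have hπ := Real.pi_pos
  have hK0 : (0:ℝ) < K := by linarith
  have hE0 : (0:ℝ) < E := by linarith
  obtain ⟨u, hu⟩ : ∃ u, u = K ^ ((1:ℝ)/3) := ⟨_, rfl⟩
  obtain ⟨v, hv⟩ : ∃ v, v = E ^ ((1:ℝ)/4) := ⟨_, rfl⟩
  have hu0 : 0 < u := hu ▸ Real.rpow_pos_of_pos hK0 _
  have hv0 : 0 < v := hv ▸ Real.rpow_pos_of_pos hE0 _
  have hKu : K = u ^ 3 := by
    rw [hu, ← Real.rpow_natCast (K ^ ((1:ℝ)/3)) 3, ← Real.rpow_mul hK0.le]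
    norm_num
  have hEv : E = v ^ 4 := by
    rw [hv, ← Real.rpow_natCast (E ^ ((1:ℝ)/4)) 4, ← Real.rpow_mul hE0.le]
    norm_num
  have hkuv : k = u ^ 2 * v := by
    rw [hk, hu, hv, ← Real.rpow_natCast (K ^ ((1:ℝ)/3)) 2, ← Real.rpow_mul hK0.le]
    norm_num
  have hEneg : E ^ (-(1:ℝ)/4) = v⁻¹ := by
    rw [hv, ← Real.rpow_neg_one (E ^ ((1:ℝ)/4)), ← Real.rpow_mul hE0.le]
    norm_num
  have hE32 : E ^ ((3:ℝ)/2) = v ^ 6 := by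
    rw [hv, ← Real.rpow_natCast (E ^ ((1:ℝ)/4)) 6, ← Real.rpow_mul hE0.le]
    norm_num
  have h24 : ((2:ℝ) ^ ((1:ℝ)/4)) ^ 4 = 2 := by
    rw [← Real.rpow_natCast ((2:ℝ) ^ ((1:ℝ)/4)) 4, ← Real.rpow_mul (by norm_num : (0:ℝ) ≤ 2)]
    norm_num
  have h2' : 2 * u ^ 4 < v ^ 4 := by
    have h2u : (2:ℝ) ^ ((1:ℝ)/4) * u < v := by rw [hu, hv]; exact h2
    have := pow_lt_pow_left₀ h2u (by positivity) (by norm_num : 4 ≠ 0)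
    rwa [mul_pow, h24] at this
  obtain ⟨A, hA⟩ : ∃ A, A = 1 - Real.pi * (D + 1) * E ^ (-(1:ℝ)/4) := ⟨_, rfl⟩
  have hA0 : 0 < A := by rw [hA]; linarith
  obtain ⟨y, hy⟩ : ∃ y, y = (2 / Real.pi) * u ^ 2 * v ^ 2 * A := ⟨_, rfl⟩
  have hy0 : 0 < y := by rw [hy]; positivity
  have hkK : k / K = v / u := by
    rw [hkuv, hKu]; field_simp
  have hX1 : (1:ℝ) < (k / K) ^ 4 - 1 := by
    rw [hkK, div_pow]
    rw [lt_sub_iff_add_lt, lt_div_iff₀ (by positivity)]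
    nlinarith [pow_pos hu0 4]
  have hXle : (k / K) ^ 4 - 1 ≤ (v / u) ^ 4 := by
    rw [hkK]; linarith [pow_pos (div_pos hv0 hu0) 4]
  have hmono : ((v / u) ^ 4 : ℝ) ^ (-(1:ℝ)/2) ≤ ((k / K) ^ 4 - 1) ^ (-(1:ℝ)/2) :=
    Real.rpow_le_rpow_of_nonpos (by linarith) hXle (by norm_num)
  have hval : ((v / u) ^ 4 : ℝ) ^ (-(1:ℝ)/2) = u ^ 2 / v ^ 2 := by
    rw [← Real.rpow_natCast (v / u) 4, ← Real.rpow_mul (by positivity)]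
    have h4 : ((4:ℕ):ℝ) * (-(1:ℝ)/2) = ((-2:ℤ):ℝ) := by norm_num
    rw [h4, Real.rpow_intCast, zpow_neg, show ((2:ℤ)) = ((2:ℕ):ℤ) from rfl, zpow_natCast,
      div_pow, inv_div]
  have hexp : 2 * (D + 1) * k - (2 / Real.pi) * ((k / K)^4 - 1) ^ (-(1:ℝ)/2) * E ≤ -y := by
    have hterm : (2 / Real.pi) * (u ^ 2 / v ^ 2) * E ≤
        (2 / Real.pi) * ((k / K)^4 - 1) ^ (-(1:ℝ)/2) * E := by
      rw [← hval]
      exact mul_le_mul_of_nonneg_right (mul_le_mul_of_nonneg_left hmono (by positivity)) hE0.le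
    have hyval : -y = 2 * (D + 1) * k - (2 / Real.pi) * (u ^ 2 / v ^ 2) * E := by
      rw [hy, hA, hEneg, hkuv, hEv]
      field_simp
      ring
    rw [hyval]
    linarith
  have hcube : y ^ 3 / 6 ≤ Real.exp y := by
    have h := Real.sum_le_exp_of_nonneg hy0.le 4
    have hsum : ∑ i ∈ Finset.range 4, y ^ i / (Nat.factorial i) =
        1 + y + y ^ 2 / 2 + y ^ 3 / 6 := by
      simp [Finset.sum_range_succ, Nat.factorial]
    rw [hsum] at h
    have h2y : 0 ≤ y ^ 2 / 2 := by positivity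
    linarith
  have hexpy : Real.exp (-y) ≤ 6 / y ^ 3 := by
    rw [Real.exp_neg, ← one_div]
    rw [div_le_div_iff₀ (Real.exp_pos y) (by positivity)]
    nlinarith [hcube, Real.exp_pos y]
  have hrhs : 6 / y ^ 3 = (3 * Real.pi^3 / 4) *
      (K^2 * E ^ ((3:ℝ)/2) * A^3)⁻¹ := by
    rw [hy, hKu, hE32]
    field_simp
    ring
  calc Real.exp (2 * (D + 1) * k - (2 / Real.pi) * ((k / K)^4 - 1) ^ (-(1:ℝ)/2) * E)
      ≤ Real.exp (-y) := Real.exp_le_exp.mpr hexp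
    _ ≤ 6 / y ^ 3 := hexpy
    _ = (3 * Real.pi^3 / 4) * (K^2 * E ^ ((3:ℝ)/2) * A^3)⁻¹ := hrhs
    _ = _ := by rw [hA]
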